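/- Let N₁, …, N_m be positive integers with N_{t_k} = max{1, ∑_{i<k} N_i} and suppose for each k, N_k ≤ N_{t_k} (doubling condition per state-action aggregated), and ∑_k N_k = T. Then ∑_{k=1}^m N_k / √(N_{t_k}) ≤ (√2 + 1)·√T. -/

import Mathlib

lemma key_ineq (Z x : ℝ) (hZ : 1 ≤ Z) (hx0 : 0 ≤ x) (hx : x ≤ Z) :
    (Real.sqrt 2 + 1) * Real.sqrt Z + x / Real.sqrt Z ≤
      (Real.sqrt 2 + 1) * Real.sqrt (Z + x) := by
  set a := Real.sqrt Z with ha
  set b := Real.sqrt (Z + x) with hb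
  have ha1 : 1 ≤ a := Real.one_le_sqrt.2 hZ
  have ha0 : 0 < a := lt_of_lt_of_le one_pos ha1
  have hab : a ≤ b := Real.sqrt_le_sqrt (by linarith)
  have ha2 : a ^ 2 = Z := Real.sq_sqrt (by linarith)
  have hb2 : b ^ 2 = Z + x := Real.sq_sqrt (by linarith)
  have hbs : b ≤ Real.sqrt 2 * a := by
    rw [hb, ha, ← Real.sqrt_mul (by norm_num)]
    exact Real.sqrt_le_sqrt (by linarith)
  have hkey : x / a ≤ (Real.sqrt 2 + 1) * (b - a) := by
    rw [div_le_iff₀ ha0]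
    nlinarith [mul_nonneg (sub_nonneg.2 hab) (sub_nonneg.2 hbs)]
  nlinarith

lemma aux_bound (f : ℕ → ℕ) : ∀ n : ℕ, (∀ k < n, 0 < f k) →
    (∀ k < n, f k ≤ max 1 (∑ i ∈ Finset.range k, f i)) →
    ∑ k ∈ Finset.range n, (f k : ℝ) / Real.sqrt (max 1 (∑ i ∈ Finset.range k, f i) : ℕ) ≤
      (Real.sqrt 2 + 1) * Real.sqrt ((∑ k ∈ Finset.range n, f k : ℕ) : ℝ) := by
  intro n
  induction n with
  | zero => simp
  | succ n ih =>
    intro hpos hdouble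
    have hpos' : ∀ k < n, 0 < f k := fun k hk => hpos k (hk.trans n.lt_succ_self)
    have hdouble' : ∀ k < n, f k ≤ max 1 (∑ i ∈ Finset.range k, f i) :=
      fun k hk => hdouble k (hk.trans n.lt_succ_self)
    have IH := ih hpos' hdouble'
    rw [Finset.sum_range_succ, Finset.sum_range_succ]
    set S : ℕ := ∑ i ∈ Finset.range n, f i with hS
    have hfpos : 0 < f n := hpos n n.lt_succ_self
    have hfle : f n ≤ max 1 S := hdouble n n.lt_succ_self
    rcases Nat.eq_zero_or_pos S with h0 | hSpos
    · -- S = 0, so max 1 S = 1, f n = 1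
      have hf1 : f n = 1 := le_antisymm (by simpa [h0] using hfle) hfpos
      have hsum0 : ∑ k ∈ Finset.range n, (f k : ℝ) / Real.sqrt (max 1 (∑ i ∈ Finset.range k, f i) : ℕ) = 0 := by
        apply Finset.sum_eq_zero
        intro k hk
        have : f k = 0 := by
          have := Finset.single_le_sum (f := f) (fun i _ => Nat.zero_le _) hk
          omega
        simp [this]
      rw [hsum0, h0, hf1]
      have h2 : (0:ℝ) ≤ Real.sqrt 2 := Real.sqrt_nonneg 2
      simp
      
    · have hmax : max 1 S = S := max_eq_right hSpos
      have hZ1 : (1:ℝ) ≤ (S:ℝ) := by exact_mod_cast hSpos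
      have hx0 : (0:ℝ) ≤ (f n : ℝ) := Nat.cast_nonneg _
      have hxZ : (f n : ℝ) ≤ (S:ℝ) := by exact_mod_cast (hmax ▸ hfle)
      calc (∑ k ∈ Finset.range n, (f k : ℝ) / Real.sqrt (max 1 (∑ i ∈ Finset.range k, f i) : ℕ))
            + (f n : ℝ) / Real.sqrt (max 1 S : ℕ)
          ≤ (Real.sqrt 2 + 1) * Real.sqrt ((S:ℕ) : ℝ) + (f n : ℝ) / Real.sqrt ((S:ℕ) : ℝ) := by
            rw [hmax]; exact add_le_add_left IH _
        _ ≤ (Real.sqrt 2 + 1) * Real.sqrt ((S:ℝ) + f n) := key_ineq _ _ hZ1 hx0 hxZ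
        _ = (Real.sqrt 2 + 1) * Real.sqrt (((∑ i ∈ Finset.range n, f i) + f n : ℕ) : ℝ) := by
            rw [Nat.cast_add]

/-- Standard episode-sum bound: with `N_{t_k} = max{1, ∑_{i<k} N_i}`, if each episode
length satisfies `N_k ≤ N_{t_k}` and `∑ N_k = T`, then
`∑ N_k / √(N_{t_k}) ≤ (√2 + 1)·√T`. -/
theorem episode_sum_bound {m : ℕ} (N : Fin m → ℕ) (T : ℕ)
    (hpos : ∀ k, 0 < N k)
    (hdouble : ∀ k : Fin m, N k ≤ max 1 (∑ i ∈ Finset.Iio k, N i))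
    (hT : ∑ k, N k = T) :
    ∑ k, (N k : ℝ) / Real.sqrt (max 1 (∑ i ∈ Finset.Iio k, N i) : ℕ) ≤
      (Real.sqrt 2 + 1) * Real.sqrt T := by
  set f : ℕ → ℕ := fun i => if h : i < m then N ⟨i, h⟩ else 0 with hf
  have hinner : ∀ k : Fin m, ∑ i ∈ Finset.Iio k, N i = ∑ i ∈ Finset.range k.val, f i := by
    intro k
    rw [← Nat.Iio_eq_range, ← Fin.map_valEmbedding_Iio, Finset.sum_map]
    refine Finset.sum_congr rfl fun i _ => ?_
    simp [hf, i.isLt]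
  have houter : ∀ (g : ℕ → ℝ), ∑ k : Fin m, g k.val = ∑ k ∈ Finset.range m, g k :=
    fun g => Fin.sum_univ_eq_sum_range g m
  have hTsum : ∑ k ∈ Finset.range m, f k = T := by
    rw [← hT, ← Fin.sum_univ_eq_sum_range]
    exact Finset.sum_congr rfl fun i _ => by simp [hf, i.isLt]
  have key := aux_bound f m
    (fun k hk => by simpa [hf, hk] using hpos ⟨k, hk⟩)
    (fun k hk => by
      have := hdouble ⟨k, hk⟩
      rw [hinner ⟨k, hk⟩] at this
      simpa [hf, hk] using this)
  rw [hTsum] at key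
  refine le_trans (le_of_eq ?_) key
  rw [← houter (fun k => (f k : ℝ) / Real.sqrt (max 1 (∑ i ∈ Finset.range k, f i) : ℕ))]
  refine Finset.sum_congr rfl fun k _ => ?_
  rw [hinner k]
  simp [hf, k.isLt]
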